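/- Let δ, N ⊆ ℕ^n be standard sets with δ ⊆ N, δ finite. Write N^{(1)} = ℬ(N) and N^{(2)} = ℬ(N ∪ N^{(1)}). Let B be a commutative ring and (a_{α,β})_{α ∈ N ∪ N^{(1)}, β ∈ δ} satisfy: (1) a_{α,β} = δ_{αβ} for α ∈ N; (2) a_{α+e_i,β} = Σ_{γ∈δ} a_{α,γ} a_{γ+e_i,β} whenever α, α+e_i ∈ N ∪ N^{(1)}; (3) Σ_γ a_{α,γ} a_{γ+e_i,β} = Σ_γ a_{α',γ} a_{γ+e_j,β} whenever α, α' ∈ N^{(1)}, α+e_i = α'+e_j ∈ N^{(2)}. Then there is a unique extension of (a_{α,β}) to all α ∈ ℕ^n satisfying a_{α+e_i,β} = Σ_{γ∈δ} a_{α,γ} a_{γ+e_i,β} for all α ∈ ℕ^n, i, β. -/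

import Mathlib

/-- A standard set in ℕ^n: its complement is closed under addition of elements of ℕ^n. -/
def StdSet {n : ℕ} (N : Set (Fin n →₀ ℕ)) : Prop :=
  ∀ α ∉ N, ∀ γ : Fin n →₀ ℕ, α + γ ∉ N

/-- The border of N: elements outside N of the form β + e_i with β ∈ N. -/
def StdBorder {n : ℕ} (N : Set (Fin n →₀ ℕ)) : Set (Fin n →₀ ℕ) :=
  {α | α ∉ N ∧ ∃ (i : Fin n), ∃ β ∈ N, β + Finsupp.single i 1 = α}

section Aux

variable {B : Type*} [CommRing B] {n : ℕ} (δ : Finset (Fin n →₀ ℕ))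
  (a : (Fin n →₀ ℕ) → ↥δ → B)

/-- The transfer operator in direction `i`. -/
noncomputable def auxT (i : Fin n) : Function.End (↥δ → B) :=
  fun v β => ∑ γ : ↥δ, v γ * a ((γ : Fin n →₀ ℕ) + Finsupp.single i 1) β

lemma auxT_apply (i : Fin n) (v : ↥δ → B) (β : ↥δ) :
    auxT δ a i v β = ∑ γ : ↥δ, v γ * a ((γ : Fin n →₀ ℕ) + Finsupp.single i 1) β := rfl

lemma auxT_double (i j : Fin n) (v : ↥δ → B) (β : ↥δ) :
    auxT δ a i (auxT δ a j v) β = ∑ γ : ↥δ, v γ *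
      ∑ γ' : ↥δ, a ((γ : Fin n →₀ ℕ) + Finsupp.single j 1) γ' *
        a ((γ' : Fin n →₀ ℕ) + Finsupp.single i 1) β :=
  calc
    auxT δ a i (auxT δ a j v) β
        = ∑ γ' : ↥δ, (∑ γ : ↥δ, v γ * a ((γ : Fin n →₀ ℕ) + Finsupp.single j 1) γ') *
            a ((γ' : Fin n →₀ ℕ) + Finsupp.single i 1) β := rfl
    _ = ∑ γ' : ↥δ, ∑ γ : ↥δ, v γ * (a ((γ : Fin n →₀ ℕ) + Finsupp.single j 1) γ' *
            a ((γ' : Fin n →₀ ℕ) + Finsupp.single i 1) β) := by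
          simp only [Finset.sum_mul, mul_assoc]
    _ = ∑ γ : ↥δ, ∑ γ' : ↥δ, v γ * (a ((γ : Fin n →₀ ℕ) + Finsupp.single j 1) γ' *
            a ((γ' : Fin n →₀ ℕ) + Finsupp.single i 1) β) := Finset.sum_comm
    _ = _ := by simp only [Finset.mul_sum]

variable (hcomm : ∀ i j : Fin n, Commute (auxT δ a i) (auxT δ a j))

/-- Product of powers of the transfer operators. -/
noncomputable def auxP (α : Fin n →₀ ℕ) : Function.End (↥δ → B) :=
  Finset.univ.noncommProd (fun i => auxT δ a i ^ α i)
    (fun i _ j _ _ => (hcomm i j).pow_pow _ _)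

lemma auxP_zero : auxP δ a hcomm 0 = 1 := by
  exact (Finset.noncommProd_eq_pow_card _ _ _ 1 (by intro x _; simp)).trans (one_pow _)

lemma auxP_succ (α : Fin n →₀ ℕ) (i : Fin n) :
    auxP δ a hcomm (α + Finsupp.single i 1) = auxT δ a i * auxP δ a hcomm α := by
  classical
  have c1 : ((Finset.univ : Finset (Fin n)) : Set (Fin n)).Pairwise fun x y =>
      Commute (auxT δ a x ^ (Finsupp.single i 1 : Fin n →₀ ℕ) x) (auxT δ a y ^ (Finsupp.single i 1 : Fin n →₀ ℕ) y) :=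
    fun x _ y _ _ => (hcomm x y).pow_pow _ _
  have c2 : ((Finset.univ : Finset (Fin n)) : Set (Fin n)).Pairwise fun x y =>
      Commute (auxT δ a x ^ α x) (auxT δ a y ^ α y) :=
    fun x _ y _ _ => (hcomm x y).pow_pow _ _
  have c3 : ((Finset.univ : Finset (Fin n)) : Set (Fin n)).Pairwise fun x y =>
      Commute (auxT δ a x ^ α x) (auxT δ a y ^ (Finsupp.single i 1 : Fin n →₀ ℕ) y) :=
    fun x _ y _ _ => (hcomm x y).pow_pow _ _
  have e1 : ∀ j ∈ (Finset.univ : Finset (Fin n)),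
      auxT δ a j ^ ((α + Finsupp.single i 1 : Fin n →₀ ℕ) j)
        = ((fun j => auxT δ a j ^ (Finsupp.single i 1 : Fin n →₀ ℕ) j) *
            fun j => auxT δ a j ^ α j) j := by
    intro j _
    simp only [Finsupp.add_apply, Pi.mul_apply]
    rw [add_comm, pow_add]
  have spike : Finset.univ.noncommProd (fun j => auxT δ a j ^ (Finsupp.single i 1 : Fin n →₀ ℕ) j) c1
      = auxT δ a i := by
    rw [← Finset.mul_noncommProd_erase _ (Finset.mem_univ i)]
    refine (congrArg (auxT δ a i ^ (Finsupp.single i 1 : Fin n →₀ ℕ) i * ·)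
      (Finset.noncommProd_eq_pow_card _ _ _ 1 ?_)).trans (by rw [one_pow, mul_one]; simp)
    · intro x hx
      have hxi : x ≠ i := (Finset.mem_erase.mp hx).1
      simp [Finsupp.single_apply, (Ne.symm hxi)]
  calc auxP δ a hcomm (α + Finsupp.single i 1)
      = Finset.univ.noncommProd ((fun j => auxT δ a j ^ (Finsupp.single i 1 : Fin n →₀ ℕ) j) *
          fun j => auxT δ a j ^ α j) (Finset.noncommProd_mul_distrib_aux c1 c2 c3) :=
        Finset.noncommProd_congr rfl e1 _
    _ = Finset.univ.noncommProd (fun j => auxT δ a j ^ (Finsupp.single i 1 : Fin n →₀ ℕ) j) c1 *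
          Finset.univ.noncommProd (fun j => auxT δ a j ^ α j) c2 :=
        Finset.noncommProd_mul_distrib _ _ c1 c2 c3
    _ = auxT δ a i * auxP δ a hcomm α := by rw [spike]; rfl

end Aux

/-- degree of a multi-index -/
def auxDeg {n : ℕ} (α : Fin n →₀ ℕ) : ℕ := ∑ j, α j

lemma auxDeg_zero {n : ℕ} (α : Fin n →₀ ℕ) (h : auxDeg α = 0) : α = 0 := by
  ext j
  have := Finset.sum_eq_zero_iff.mp h j (Finset.mem_univ j)
  simpa using this

lemma auxDeg_succ {n : ℕ} (α : Fin n →₀ ℕ) (i : Fin n) :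
    auxDeg (α + Finsupp.single i 1) = auxDeg α + 1 := by
  simp [auxDeg, Finsupp.add_apply, Finset.sum_add_distrib, Finsupp.single_apply]

lemma auxDecomp {n : ℕ} (α : Fin n →₀ ℕ) (hα : α ≠ 0) :
    ∃ (α₀ : Fin n →₀ ℕ) (i : Fin n), α = α₀ + Finsupp.single i 1 := by
  obtain ⟨i, hi⟩ : ∃ i, α i ≠ 0 := by
    by_contra h
    push_neg at h
    exact hα (Finsupp.ext h)
  refine ⟨α - Finsupp.single i 1, i, ?_⟩
  rw [tsub_add_cancel_of_le (Finsupp.single_le_iff.mpr (Nat.one_le_iff_ne_zero.mpr hi))]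

theorem stmt13 {B : Type*} [CommRing B] {n : ℕ}
    (δ : Finset (Fin n →₀ ℕ)) (N : Set (Fin n →₀ ℕ))
    (hδstd : ∀ α ∉ δ, ∀ γ : Fin n →₀ ℕ, α + γ ∉ δ)
    (hNstd : StdSet N) (hδN : ↑δ ⊆ N)
    (a : (Fin n →₀ ℕ) → ↥δ → B)
    (h1 : ∀ α ∈ N, ∀ β : ↥δ, a α β = if α = (β : Fin n →₀ ℕ) then 1 else 0)
    (h2 : ∀ (α : Fin n →₀ ℕ) (i : Fin n), α ∈ N ∪ StdBorder N →
      α + Finsupp.single i 1 ∈ N ∪ StdBorder N →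
      ∀ β : ↥δ, a (α + Finsupp.single i 1) β =
        ∑ γ : ↥δ, a α γ * a ((γ : Fin n →₀ ℕ) + Finsupp.single i 1) β)
    (h3 : ∀ (α α' : Fin n →₀ ℕ) (i j : Fin n), α ∈ StdBorder N → α' ∈ StdBorder N →
      α + Finsupp.single i 1 = α' + Finsupp.single j 1 →
      α + Finsupp.single i 1 ∈ StdBorder (N ∪ StdBorder N) →
      ∀ β : ↥δ, ∑ γ : ↥δ, a α γ * a ((γ : Fin n →₀ ℕ) + Finsupp.single i 1) β =
        ∑ γ : ↥δ, a α' γ * a ((γ : Fin n →₀ ℕ) + Finsupp.single j 1) β) :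
    ∃! a' : (Fin n →₀ ℕ) → ↥δ → B,
      (∀ α ∈ N ∪ StdBorder N, a' α = a α) ∧
      ∀ (α : Fin n →₀ ℕ) (i : Fin n) (β : ↥δ),
        a' (α + Finsupp.single i 1) β =
          ∑ γ : ↥δ, a' α γ * a' ((γ : Fin n →₀ ℕ) + Finsupp.single i 1) β := by
  classical
  rcases Finset.eq_empty_or_nonempty δ with hδe | hδne
  · subst hδe
    refine ⟨a, ⟨fun α _ => rfl, ?_⟩, ?_⟩
    · intro α i β
      exact absurd β.2 (Finset.notMem_empty _)
    · intro b _
      funext α β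
      exact absurd β.2 (Finset.notMem_empty _)
  have h0δ : (0 : Fin n →₀ ℕ) ∈ δ := by
    obtain ⟨x, hx⟩ := hδne
    by_contra h
    have := hδstd 0 h x
    rw [zero_add] at this
    exact this hx
  have hδmem : ∀ γ : ↥δ, (γ : Fin n →₀ ℕ) ∈ N := fun γ => hδN γ.2
  have hstep : ∀ x ∈ N, ∀ i : Fin n, x + Finsupp.single i 1 ∈ N ∪ StdBorder N := by
    intro x hx i
    by_cases h : x + Finsupp.single i 1 ∈ N
    · exact Or.inl h
    · exact Or.inr ⟨h, i, x, hx, rfl⟩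
  -- the key exchange lemma
  have hL : ∀ (γ : ↥δ) (i j : Fin n) (β : ↥δ),
      ∑ γ' : ↥δ, a ((γ : Fin n →₀ ℕ) + Finsupp.single i 1) γ' *
          a ((γ' : Fin n →₀ ℕ) + Finsupp.single j 1) β
      = ∑ γ' : ↥δ, a ((γ : Fin n →₀ ℕ) + Finsupp.single j 1) γ' *
          a ((γ' : Fin n →₀ ℕ) + Finsupp.single i 1) β := by
    intro γ i j β
    have hcm : (γ : Fin n →₀ ℕ) + Finsupp.single j 1 + Finsupp.single i 1
        = (γ : Fin n →₀ ℕ) + Finsupp.single i 1 + Finsupp.single j 1 := add_right_comm _ _ _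
    have hi : (γ : Fin n →₀ ℕ) + Finsupp.single i 1 ∈ N ∪ StdBorder N := hstep _ (hδmem γ) i
    have hj : (γ : Fin n →₀ ℕ) + Finsupp.single j 1 ∈ N ∪ StdBorder N := hstep _ (hδmem γ) j
    by_cases hc : (γ : Fin n →₀ ℕ) + Finsupp.single i 1 + Finsupp.single j 1 ∈ N ∪ StdBorder N
    · rw [← h2 _ j hi hc β, ← h2 _ i hj (hcm ▸ hc) β, hcm]
    · have hbi : (γ : Fin n →₀ ℕ) + Finsupp.single i 1 ∈ StdBorder N := by
        rcases hi with h | h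
        · exact absurd (hstep _ h j) hc
        · exact h
      have hbj : (γ : Fin n →₀ ℕ) + Finsupp.single j 1 ∈ StdBorder N := by
        rcases hj with h | h
        · exact absurd (hcm ▸ hstep _ h i) hc
        · exact h
      exact h3 _ _ j i hbi hbj hcm.symm ⟨hc, j, _, Or.inr hbi, rfl⟩ β
  -- the transfer operators commute
  have hcomm : ∀ i j : Fin n, Commute (auxT δ a i) (auxT δ a j) := by
    intro i j
    show auxT δ a i * auxT δ a j = auxT δ a j * auxT δ a i
    funext v β
    show auxT δ a i (auxT δ a j v) β = auxT δ a j (auxT δ a i v) β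
    rw [auxT_double, auxT_double]
    exact Finset.sum_congr rfl fun γ _ => by rw [hL γ j i β]
  have hNdown : ∀ (α₀ : Fin n →₀ ℕ) (i : Fin n), α₀ + Finsupp.single i 1 ∈ N → α₀ ∈ N := by
    intro α₀ i h
    by_contra h0
    exact hNstd α₀ h0 _ h
  -- the candidate extension agrees with a on N ∪ border
  have key : ∀ m : ℕ, ∀ α : Fin n →₀ ℕ, auxDeg α = m → α ∈ N ∪ StdBorder N →
      auxP δ a hcomm α (a 0) = a α := by
    intro m
    induction m using Nat.strong_induction_on with
    | _ m ih =>
      intro α hdα hαmem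
      by_cases h0 : α = 0
      · subst h0
        rw [auxP_zero]
        rfl
      · obtain ⟨α₀, i, hα₀, hα₀mem⟩ : ∃ (α₀ : Fin n →₀ ℕ) (i : Fin n),
            α = α₀ + Finsupp.single i 1 ∧ α₀ ∈ N := by
          rcases hαmem with hN | hB
          · obtain ⟨α₀, i, rfl⟩ := auxDecomp α h0
            exact ⟨α₀, i, rfl, hNdown _ _ hN⟩
          · obtain ⟨-, i, β', hβ', hb⟩ := hB
            exact ⟨β', i, hb.symm, hβ'⟩
        subst hα₀
        have hdlt : auxDeg α₀ < m := by rw [← hdα, auxDeg_succ]; omega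
        have ihα₀ := ih (auxDeg α₀) hdlt α₀ rfl (Or.inl hα₀mem)
        rw [auxP_succ]
        show auxT δ a i (auxP δ a hcomm α₀ (a 0)) = _
        rw [ihα₀]
        funext β
        exact (h2 α₀ i (Or.inl hα₀mem) hαmem β).symm
  have f1 : ∀ α ∈ N ∪ StdBorder N, auxP δ a hcomm α (a 0) = a α :=
    fun α h => key (auxDeg α) α rfl h
  have f2 : ∀ (α : Fin n →₀ ℕ) (i : Fin n) (β : ↥δ),
      auxP δ a hcomm (α + Finsupp.single i 1) (a 0) β =
        ∑ γ : ↥δ, auxP δ a hcomm α (a 0) γ *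
          auxP δ a hcomm ((γ : Fin n →₀ ℕ) + Finsupp.single i 1) (a 0) β := by
    intro α i β
    rw [auxP_succ]
    show ∑ γ : ↥δ, auxP δ a hcomm α (a 0) γ * a ((γ : Fin n →₀ ℕ) + Finsupp.single i 1) β = _
    refine Finset.sum_congr rfl fun γ _ => ?_
    rw [f1 _ (hstep _ (hδmem γ) i)]
  refine ⟨fun α => auxP δ a hcomm α (a 0), ⟨f1, f2⟩, ?_⟩
  rintro b ⟨hb1, hb2⟩
  have huniq : ∀ m : ℕ, ∀ α : Fin n →₀ ℕ, auxDeg α = m → b α = auxP δ a hcomm α (a 0) := by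
    intro m
    induction m using Nat.strong_induction_on with
    | _ m ih =>
      intro α hdα
      by_cases h0 : α = 0
      · subst h0
        rw [hb1 0 (Or.inl (hδN h0δ)), auxP_zero]
        rfl
      · obtain ⟨α₀, i, rfl⟩ := auxDecomp α h0
        have hdlt : auxDeg α₀ < m := by rw [← hdα, auxDeg_succ]; omega
        funext β
        rw [hb2 α₀ i β, auxP_succ]
        show _ = ∑ γ : ↥δ, auxP δ a hcomm α₀ (a 0) γ *
          a ((γ : Fin n →₀ ℕ) + Finsupp.single i 1) β
        refine Finset.sum_congr rfl fun γ _ => ?_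
        rw [ih (auxDeg α₀) hdlt α₀ rfl, hb1 _ (hstep _ (hδmem γ) i)]
  exact funext fun α => huniq (auxDeg α) α rfl
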